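/- If σ verifies the optimality condition, then for every y ∈ [0,1] the fiber f_σ^{-1}(y) is uncountable. -/

import Mathlib

/-- Apply a `k`-block substitution blockwise to a finite word, dropping the
trailing partial block (the paper's truncation convention). -/
def blockApply (k : Nat) (sigma : List Bool -> List Bool) (w : List Bool) : List Bool :=
  if h : 0 < k && k <= w.length then
    sigma (w.take k) ++ blockApply k sigma (w.drop k)
  else []
termination_by w.length
decreasing_by
  simp only [Bool.and_eq_true, decide_eq_true_eq] at h
  simp [List.length_drop]
  omega

/-- The length-`m` prefix of an infinite binary word. -/
def prefixOf (u : Nat -> Bool) (m : Nat) : List Bool := List.ofFn fun i : Fin m => u i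

/-- Concatenation of the first `m` words of a sequence of finite words. -/
def concatPre (v : Nat -> List Bool) (m : Nat) : List Bool :=
  (List.ofFn fun i : Fin m => v i).flatten

/-- The optimality condition: every infinite binary word is an infinite
concatenation of nonempty images of length-`k` blocks under `sigma`. -/
def OC (k : Nat) (sigma : List Bool -> List Bool) : Prop :=
  ∀ w : Nat -> Bool, ∃ u : Nat -> List Bool,
    (∀ i, (u i).length = k ∧ sigma (u i) ≠ []) ∧
    ∀ m, concatPre (fun i => sigma (u i)) m
        = prefixOf w (concatPre (fun i => sigma (u i)) m).length

/-- Value of a finite binary word read as binary digits after the point. -/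
noncomputable def valFin (w : List Bool) : ℝ :=
  ((w.zipIdx.map Prod.swap).map fun p => if p.2 then ((2:ℝ))⁻¹ ^ (p.1 + 1) else 0).sum

/-- Value of an infinite binary word read as binary digits after the point. -/
noncomputable def valInf (u : Nat -> Bool) : ℝ :=
  ∑' i : Nat, if u i then ((2:ℝ))⁻¹ ^ (i + 1) else 0

/-- A word is not eventually zero (it has infinitely many ones). -/
def NEZ (u : Nat -> Bool) : Prop := ∀ n, ∃ m, n ≤ m ∧ u m = true

open Classical in
/-- The unique binary expansion of `x ∈ (0,1]` not ending in `0^∞`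
(junk value, the zero word, if no such expansion exists). -/
noncomputable def tilde (x : ℝ) : Nat -> Bool :=
  if h : ∃ u : Nat -> Bool, NEZ u ∧ valInf u = x then h.choose else fun _ => false

open Classical in
/-- The interval map induced by the erasing `k`-block substitution `sigma`
(with erased block `weps`) acting on binary expansions: `f x = 0.sigma(x̃)`,
with value `0` at `x = 0` (no expansion not ending in `0^∞`) and when
`x̃ = weps^∞`. -/
noncomputable def fSigma (k : Nat) (sigma : List Bool -> List Bool) (weps : List Bool)
    (x : ℝ) : ℝ :=
  if (¬ ∃ u : Nat -> Bool, NEZ u ∧ valInf u = x) ∨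
     (∀ i : Nat, tilde x i = weps.getD (i % k) false) then 0
  else ⨆ n : Nat, valFin (blockApply k sigma (prefixOf (tilde x) (n * k)))


noncomputable def valAux (n : Nat) (w : List Bool) : ℝ :=
  (((w.zipIdx n).map Prod.swap).map fun p => if p.2 then ((2:ℝ))⁻¹ ^ (p.1 + 1) else 0).sum

lemma valFin_eq_valAux (w : List Bool) : valFin w = valAux 0 w := rfl

lemma valAux_nil (n : Nat) : valAux n [] = 0 := rfl

lemma valAux_cons (n : Nat) (a : Bool) (w : List Bool) :
    valAux n (a :: w) = (if a then ((2:ℝ))⁻¹ ^ (n+1) else 0) + valAux (n+1) w := by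
  simp [valAux, List.zipIdx_cons]

lemma valAux_succ (n : Nat) (w : List Bool) : valAux (n+1) w = 2⁻¹ * valAux n w := by
  induction w generalizing n with
  | nil => simp [valAux_nil]
  | cons a w ih =>
    rw [valAux_cons, valAux_cons, ih, mul_add]
    congr 1
    by_cases h : a <;> simp [h, pow_succ]; ring

lemma valFin_cons (a : Bool) (w : List Bool) :
    valFin (a :: w) = (if a then (2:ℝ)⁻¹ else 0) + 2⁻¹ * valFin w := by
  rw [valFin_eq_valAux, valAux_cons, valAux_succ, ← valFin_eq_valAux]
  norm_num

lemma valFin_nil : valFin [] = 0 := rfl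

lemma valFin_append (w v : List Bool) :
    valFin (w ++ v) = valFin w + ((2:ℝ))⁻¹ ^ w.length * valFin v := by
  induction w with
  | nil => simp [valFin_nil]
  | cons a w ih =>
    simp only [List.cons_append, valFin_cons, ih, List.length_cons]
    ring

/-- the digit value sequence of an infinite word -/
noncomputable def E (u : Nat → Bool) (i : Nat) : ℝ := if u i then ((2:ℝ))⁻¹ ^ (i + 1) else 0

lemma E_nonneg (u : Nat → Bool) (i : Nat) : 0 ≤ E u i := by
  unfold E; positivity

lemma E_le (u : Nat → Bool) (i : Nat) : E u i ≤ ((2:ℝ))⁻¹ ^ (i+1) := by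
  unfold E; split
  · exact le_refl _
  · positivity

lemma summable_E (u : Nat → Bool) : Summable (E u) := by
  apply Summable.of_nonneg_of_le (E_nonneg u) (E_le u)
  exact (summable_geometric_of_lt_one (by norm_num) (by norm_num)).comp_injective
    (add_left_injective 1)

lemma valInf_eq_tsum (u : Nat → Bool) : valInf u = ∑' i, E u i := rfl

lemma prefixOf_zero (u : Nat → Bool) : prefixOf u 0 = [] := rfl

lemma prefixOf_succ (u : Nat → Bool) (m : Nat) :
    prefixOf u (m+1) = prefixOf u m ++ [u m] := by
  unfold prefixOf
  rw [List.ofFn_succ']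
  simp [List.concat_eq_append]

lemma length_prefixOf (u : Nat → Bool) (m : Nat) : (prefixOf u m).length = m := by
  simp [prefixOf]

lemma valFin_single (a : Bool) : valFin [a] = if a then (2:ℝ)⁻¹ else 0 := by
  rw [valFin_cons, valFin_nil]; ring

lemma valFin_prefixOf (u : Nat → Bool) (m : Nat) :
    valFin (prefixOf u m) = ∑ i ∈ Finset.range m, E u i := by
  induction m with
  | zero => simp [prefixOf_zero, valFin_nil]
  | succ m ih =>
    rw [prefixOf_succ, valFin_append, ih, Finset.sum_range_succ, valFin_single,
      length_prefixOf]
    unfold E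
    by_cases h : u m <;> simp [h, pow_succ]

lemma valFin_prefixOf_le (u : Nat → Bool) (m : Nat) : valFin (prefixOf u m) ≤ valInf u := by
  rw [valFin_prefixOf, valInf_eq_tsum]
  exact Summable.sum_le_tsum _ (fun i _ => E_nonneg u i) (summable_E u)

lemma valInf_nonneg (u : Nat → Bool) : 0 ≤ valInf u := by
  rw [valInf_eq_tsum]; exact tsum_nonneg (E_nonneg u)

lemma tsum_half_pow : ∑' i : ℕ, ((2:ℝ))⁻¹ ^ (i + 1) = 1 := by
  have : ∀ i : ℕ, ((2:ℝ))⁻¹ ^ (i+1) = ((2:ℝ))⁻¹ ^ i * 2⁻¹ := fun i => pow_succ _ _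
  simp only [this]
  rw [tsum_mul_right, tsum_geometric_of_lt_one (by norm_num : (0:ℝ) ≤ 2⁻¹) (by norm_num)]
  norm_num

lemma valInf_le_one (u : Nat → Bool) : valInf u ≤ 1 := by
  rw [valInf_eq_tsum, ← tsum_half_pow]
  exact Summable.tsum_le_tsum (E_le u) (summable_E u)
    ((summable_geometric_of_lt_one (by norm_num) (by norm_num)).comp_injective
      (add_left_injective 1))

lemma tendsto_valFin_prefixOf (u : Nat → Bool) :
    Filter.Tendsto (fun m => valFin (prefixOf u m)) Filter.atTop (nhds (valInf u)) := by
  have h := ((summable_E u).hasSum).tendsto_sum_nat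
  simpa [valFin_prefixOf, valInf_eq_tsum] using h

lemma monotone_valFin_prefixOf (u : Nat → Bool) :
    Monotone (fun m => valFin (prefixOf u m)) := by
  intro a b hab
  simp only [valFin_prefixOf]
  exact Finset.sum_le_sum_of_subset_of_nonneg (Finset.range_subset_range.2 hab)
    (fun i _ _ => E_nonneg u i)

lemma tsum_tail_bound (n : Nat) : ∑' i : ℕ, ((2:ℝ))⁻¹ ^ (i + (n+1) + 1) = ((2:ℝ))⁻¹ ^ (n+1) := by
  have : ∀ i : ℕ, ((2:ℝ))⁻¹ ^ (i + (n+1) + 1) = ((2:ℝ))⁻¹ ^ (i+1) * ((2:ℝ))⁻¹ ^ (n+1) := by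
    intro i; rw [← pow_add]; ring_nf
  simp only [this]
  rw [tsum_mul_right, tsum_half_pow, one_mul]

lemma valInf_lt_of (u v : Nat → Bool) (n : Nat)
    (hpre : ∀ i, i < n → u i = v i) (hu : u n = true) (hv : v n = false)
    (hm : ∃ m, n < m ∧ u m = true) : valInf v < valInf u := by
  have sumE : ∀ w : Nat → Bool, valInf w
      = ∑ i ∈ Finset.range (n+1), E w i + ∑' i, E w (i + (n+1)) := by
    intro w
    rw [valInf_eq_tsum, ← Summable.sum_add_tsum_nat_add (n+1) (summable_E w)]
  have hsummtail : ∀ w : Nat → Bool, Summable (fun i => E w (i + (n+1))) :=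
    fun w => (summable_E w).comp_injective (add_left_injective (n+1))
  have hA : ∑ i ∈ Finset.range (n+1), E v i = ∑ i ∈ Finset.range n, E u i := by
    rw [Finset.sum_range_succ]
    have : E v n = 0 := by simp [E, hv]
    rw [this, add_zero]
    exact Finset.sum_congr rfl fun i hi => by
      simp only [E, hpre i (Finset.mem_range.1 hi)]
  have hB : ∑ i ∈ Finset.range (n+1), E u i
      = ∑ i ∈ Finset.range n, E u i + ((2:ℝ))⁻¹ ^ (n+1) := by
    rw [Finset.sum_range_succ]; simp [E, hu]
  have htailv : ∑' i, E v (i + (n+1)) ≤ ((2:ℝ))⁻¹ ^ (n+1) := by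
    rw [← tsum_tail_bound n]
    exact Summable.tsum_le_tsum (fun i => E_le v _) (hsummtail v)
      (by
        have h2 := (summable_E (fun _ => true)).comp_injective (add_left_injective (n+1))
        simp only [Function.comp_def, E, if_true] at h2
        convert h2 using 2)
  have htailu : 0 < ∑' i, E u (i + (n+1)) := by
    obtain ⟨m, hnm, hum⟩ := hm
    refine Summable.tsum_pos (hsummtail u) (fun i => E_nonneg u _) (m - (n+1)) ?_
    have : m - (n+1) + (n+1) = m := by omega
    rw [this]
    simp only [E, hum, if_true]
    positivity
  calc valInf v = ∑ i ∈ Finset.range (n+1), E v i + ∑' i, E v (i + (n+1)) := sumE v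
    _ ≤ ∑ i ∈ Finset.range n, E u i + ((2:ℝ))⁻¹ ^ (n+1) := by rw [hA]; linarith
    _ < ∑ i ∈ Finset.range (n+1), E u i + ∑' i, E u (i + (n+1)) := by rw [hB]; linarith
    _ = valInf u := (sumE u).symm

lemma valInf_injOn_NEZ {u v : Nat → Bool} (hu : NEZ u) (hv : NEZ v)
    (h : valInf u = valInf v) : u = v := by
  by_contra hne
  have hex : ∃ n, u n ≠ v n := by
    by_contra hall
    push_neg at hall
    exact hne (funext hall)
  classical
  let n := Nat.find hex
  have hn : u n ≠ v n := Nat.find_spec hex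
  have hpre : ∀ i, i < n → u i = v i := fun i hi => by
    have := Nat.find_min hex hi
    simpa using this
  cases hun : u n with
  | true =>
    have hvn : v n = false := by
      cases hvn : v n with
      | true => exact absurd (hun.trans hvn.symm) hn
      | false => rfl
    obtain ⟨m, hm, hum⟩ := hu (n+1)
    have := valInf_lt_of u v n hpre hun hvn ⟨m, by omega, hum⟩
    linarith
  | false =>
    have hvn : v n = true := by
      cases hvn : v n with
      | true => rfl
      | false => exact absurd (hun.trans hvn.symm) hn
    obtain ⟨m, hm, hvm⟩ := hv (n+1)
    have := valInf_lt_of v u n (fun i hi => (hpre i hi).symm) hvn hun ⟨m, by omega, hvm⟩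
    linarith

lemma tilde_valInf {u : Nat → Bool} (hu : NEZ u) : tilde (valInf u) = u := by
  classical
  rw [tilde]
  have hex : ∃ w : Nat → Bool, NEZ w ∧ valInf w = valInf u := ⟨u, hu, rfl⟩
  rw [dif_pos hex]
  obtain ⟨hw1, hw2⟩ := hex.choose_spec
  exact valInf_injOn_NEZ hw1 hu hw2

noncomputable def remSeq (y : ℝ) : ℕ → ℝ
  | 0 => y
  | n+1 => 2 * remSeq y n - (if 1 ≤ 2 * remSeq y n then 1 else 0)

open Classical in
noncomputable def digSeq (y : ℝ) (n : ℕ) : Bool :=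
  if 1 ≤ 2 * remSeq y n then true else false

lemma remSeq_mem (y : ℝ) (h0 : 0 ≤ y) (h1 : y ≤ 1) :
    ∀ n, 0 ≤ remSeq y n ∧ remSeq y n ≤ 1 := by
  intro n
  induction n with
  | zero => exact ⟨h0, h1⟩
  | succ n ih =>
    obtain ⟨ha, hb⟩ := ih
    simp only [remSeq]
    split <;> constructor <;> linarith

lemma digSeq_invariant (y : ℝ) :
    ∀ n, y = ∑ i ∈ Finset.range n, E (digSeq y) i + remSeq y n * ((2:ℝ))⁻¹ ^ n := by
  intro n
  induction n with
  | zero => simp [remSeq]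
  | succ n ih =>
    rw [Finset.sum_range_succ]
    have hE : E (digSeq y) n = if 1 ≤ 2 * remSeq y n then ((2:ℝ))⁻¹ ^ (n+1) else 0 := by
      classical
      simp only [E, digSeq]
      split <;> simp
    have hstep : remSeq y (n+1) * ((2:ℝ))⁻¹ ^ (n+1)
        = remSeq y n * ((2:ℝ))⁻¹ ^ n - E (digSeq y) n := by
      rw [hE]
      simp only [remSeq]
      split <;> rw [pow_succ] <;> ring
    linarith [hstep, ih]

lemma exists_expansion (y : ℝ) (h0 : 0 ≤ y) (h1 : y ≤ 1) : valInf (digSeq y) = y := by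
  have hten := tendsto_valFin_prefixOf (digSeq y)
  have hmem := remSeq_mem y h0 h1
  have key : Filter.Tendsto (fun n => valFin (prefixOf (digSeq y) n))
      Filter.atTop (nhds y) := by
    have hdiff : ∀ n, y - valFin (prefixOf (digSeq y) n) = remSeq y n * ((2:ℝ))⁻¹ ^ n := by
      intro n
      rw [valFin_prefixOf]
      have := digSeq_invariant y n
      linarith
    have h2 : Filter.Tendsto (fun n : ℕ => y - remSeq y n * ((2:ℝ))⁻¹ ^ n)
        Filter.atTop (nhds y) := by
      have hz : Filter.Tendsto (fun n : ℕ => remSeq y n * ((2:ℝ))⁻¹ ^ n)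
          Filter.atTop (nhds 0) := by
        have hle : ∀ n : ℕ, remSeq y n * ((2:ℝ))⁻¹ ^ n ≤ ((2:ℝ))⁻¹ ^ n := by
          intro n
          have := (hmem n).2
          have hp : (0:ℝ) ≤ ((2:ℝ))⁻¹ ^ n := by positivity
          nlinarith
        exact squeeze_zero (fun n => mul_nonneg (hmem n).1 (by positivity)) hle
          (tendsto_pow_atTop_nhds_zero_of_lt_one (by norm_num) (by norm_num))
      simpa using Filter.Tendsto.sub (tendsto_const_nhds (x := y)) hz
    have : (fun n => valFin (prefixOf (digSeq y) n))
        = fun n : ℕ => y - remSeq y n * ((2:ℝ))⁻¹ ^ n := by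
      funext n
      have := hdiff n
      linarith
    rw [this]
    exact h2
  exact tendsto_nhds_unique hten key

lemma blockApply_nil {k : Nat} (hk : 0 < k) (sigma : List Bool → List Bool) :
    blockApply k sigma [] = [] := by
  rw [blockApply]
  rw [dif_neg]
  simp
  omega

lemma blockApply_cons {k : Nat} (hk : 0 < k) (sigma : List Bool → List Bool)
    (w v : List Bool) (hw : w.length = k) :
    blockApply k sigma (w ++ v) = sigma w ++ blockApply k sigma v := by
  rw [blockApply]
  rw [dif_pos]
  · rw [List.take_left' hw, List.drop_left' hw]
  · simp only [Bool.and_eq_true, decide_eq_true_eq, List.length_append, hw]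
    omega

lemma blockApply_join {k : Nat} (hk : 0 < k) (sigma : List Bool → List Bool)
    (gs : List (List Bool)) (h : ∀ g ∈ gs, g.length = k) :
    blockApply k sigma gs.flatten = (gs.map sigma).flatten := by
  induction gs with
  | nil => simpa using blockApply_nil hk sigma
  | cons g gs ih =>
    rw [List.flatten_cons, blockApply_cons hk sigma g gs.flatten (h g (by simp)),
      List.map_cons, List.flatten_cons, ih (fun g hg => h g (by simp [hg]))]

/-- the infinite word given by a sequence of `k`-blocks -/
def wordOf (k : Nat) (g : Nat → List Bool) (m : Nat) : Bool :=
  (g (m / k)).getD (m % k) false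

lemma prefixOf_add (u : Nat → Bool) (a b : Nat) :
    prefixOf u (a + b) = prefixOf u a ++ List.ofFn (fun i : Fin b => u (a + i)) := by
  unfold prefixOf
  rw [List.ofFn_add]
  congr 1

lemma wordOf_block {k : Nat} (hk : 0 < k) (g : Nat → List Bool)
    (n t : Nat) (ht : t < k) : wordOf k g (n * k + t) = (g n).getD t false := by
  unfold wordOf
  congr 1
  · congr 1
    rw [mul_comm, Nat.add_comm, Nat.add_mul_div_left _ _ hk, Nat.div_eq_of_lt ht]
    simp
  · rw [mul_comm, Nat.mul_add_mod, Nat.mod_eq_of_lt ht]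

lemma ofFn_getD {k : Nat} (l : List Bool) (hl : l.length = k) :
    List.ofFn (fun t : Fin k => l.getD t false) = l := by
  apply List.ext_getElem
  · simp [hl]
  · intro n h1 h2
    rw [List.getElem_ofFn]
    exact List.getD_eq_getElem l false h2

lemma prefixOf_wordOf {k : Nat} (hk : 0 < k) (g : Nat → List Bool)
    (hg : ∀ i, (g i).length = k) (n : Nat) :
    prefixOf (wordOf k g) (n * k) = (List.ofFn fun i : Fin n => g i).flatten := by
  induction n with
  | zero => simp [prefixOf_zero]
  | succ n ih =>
    have : (n + 1) * k = n * k + k := by ring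
    rw [this, prefixOf_add, ih, List.ofFn_succ']
    simp only [List.concat_eq_append, List.flatten_append, List.flatten_cons,
      List.flatten_nil, List.append_nil]
    congr 1
    all_goals first
      | rfl
      | (simp only [Fin.val_last]
         rw [← ofFn_getD (g n) (hg n)]
         congr 1
         funext t
         exact wordOf_block hk g n t t.isLt)

lemma concatPre_succ (v : Nat → List Bool) (m : Nat) :
    concatPre v (m+1) = concatPre v m ++ v m := by
  unfold concatPre
  rw [List.ofFn_succ']
  simp only [List.concat_eq_append, List.flatten_append, List.flatten_cons, List.flatten_nil,
    List.append_nil]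
  rfl

lemma concatPre_length_mono (v : Nat → List Bool) : Monotone (fun m => (concatPre v m).length) := by
  apply monotone_nat_of_le_succ
  intro m
  rw [concatPre_succ]
  simp

lemma concatPre_length_ge (v : Nat → List Bool) (hv : ∀ i, v i ≠ []) (m : Nat) :
    m ≤ (concatPre v m).length := by
  induction m with
  | zero => simp
  | succ m ih =>
    rw [concatPre_succ, List.length_append]
    have : 0 < (v m).length := List.length_pos_iff.2 (hv m)
    omega

def blk (weps : List Bool) (u : Nat → List Bool) (eps : Nat → Bool) (m : Nat) : List Bool :=
  if m % 3 = 0 then weps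
  else if m % 3 = 1 then (if eps (m/3) then weps else u (m/3))
  else (if eps (m/3) then u (m/3) else weps)

def cnt (eps : Nat → Bool) : Nat → Nat
  | 0 => 0
  | m+1 => cnt eps m +
      (if (m % 3 = 1 ∧ eps (m/3) = false) ∨ (m % 3 = 2 ∧ eps (m/3) = true) then 1 else 0)

lemma blk_length {k : Nat} (weps : List Bool) (u : Nat → List Bool) (eps : Nat → Bool)
    (hlen : weps.length = k) (hu : ∀ i, (u i).length = k) (m : Nat) :
    (blk weps u eps m).length = k := by
  unfold blk
  split
  · exact hlen
  · split
    · split <;> [exact hlen; exact hu _]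
    · split <;> [exact hu _; exact hlen]

lemma cnt_mono (eps : Nat → Bool) : Monotone (cnt eps) := by
  apply monotone_nat_of_le_succ
  intro m
  show cnt eps m ≤ cnt eps m + _
  omega

lemma cnt_spec (eps : Nat → Bool) (i : Nat) :
    cnt eps (3*i) = i ∧ cnt eps (3*i+1) = i ∧
      cnt eps (3*i+2) = (if eps i then i else i + 1) := by
  induction i with
  | zero =>
    have e1 : (0:Nat) % 3 = 0 := rfl
    have e2 : (1:Nat) % 3 = 1 := rfl
    have e3 : (1:Nat) / 3 = 0 := rfl
    refine ⟨rfl, ?_, ?_⟩ <;> cases h : eps 0 <;> simp [cnt, h]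
  | succ i ih =>
    obtain ⟨h0, h1, h2⟩ := ih
    have d1 : (3*i+2) % 3 = 2 := by omega
    have d2 : (3*i+2) / 3 = i := by omega
    have d3 : (3*(i+1)) = (3*i+2)+1 := by ring
    have h3 : cnt eps (3*(i+1)) = i + 1 := by
      rw [d3]
      show cnt eps (3*i+2) + _ = i + 1
      rw [h2, d1, d2]
      cases h : eps i <;> simp [h]
    have d4 : (3*(i+1)+1) = (3*(i+1))+1 := rfl
    have d5 : (3*(i+1)) % 3 = 0 := by omega
    have h4 : cnt eps (3*(i+1)+1) = i + 1 := by
      rw [d4]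
      show cnt eps (3*(i+1)) + _ = i + 1
      rw [h3, d5]
      simp
    refine ⟨h3, h4, ?_⟩
    have d6 : (3*(i+1)+1) % 3 = 1 := by omega
    have d7 : (3*(i+1)+1) / 3 = i+1 := by omega
    show cnt eps (3*(i+1)+1) + _ = _
    rw [h4, d6, d7]
    cases h : eps (i+1) <;> simp [h]

lemma blk_step (weps : List Bool) (u : Nat → List Bool) (eps : Nat → Bool)
    (sigma : List Bool → List Bool) (hweps : sigma weps = []) (m : Nat) :
    (sigma (blk weps u eps m) = [] ∧ cnt eps (m+1) = cnt eps m) ∨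
    (blk weps u eps m = u (cnt eps m) ∧ cnt eps (m+1) = cnt eps m + 1) := by
  set i := m / 3 with hi
  have hm : m = 3*i ∨ m = 3*i+1 ∨ m = 3*i+2 := by omega
  obtain ⟨c0, c1, c2⟩ := cnt_spec eps i
  rcases hm with hm | hm | hm
  · left
    have d1 : m % 3 = 0 := by omega
    constructor
    · simp [blk, d1, hweps]
    · show cnt eps m + _ = cnt eps m
      rw [d1]
      simp
  · have d1 : m % 3 = 1 := by omega
    have d2 : m / 3 = i := by omega
    cases h : eps i with
    | true =>
      left
      constructor
      · simp [blk, d1, d2, h, hweps]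
      · show cnt eps m + _ = cnt eps m
        rw [d1, d2, h]
        simp
    | false =>
      right
      constructor
      · rw [hm, c1]
        have e1 : (3*i+1) % 3 = 1 := by omega
        have e2 : (3*i+1) / 3 = i := by omega
        simp [blk, e1, e2, h]
      · show cnt eps m + _ = cnt eps m + 1
        rw [d1, d2, h]
        simp
  · have d1 : m % 3 = 2 := by omega
    have d2 : m / 3 = i := by omega
    cases h : eps i with
    | true =>
      right
      constructor
      · rw [hm, c2, h]
        have e1 : (3*i+2) % 3 = 2 := by omega
        have e2 : (3*i+2) / 3 = i := by omega
        simp [blk, e1, e2, h]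
      · show cnt eps m + _ = cnt eps m + 1
        rw [d1, d2, h]
        simp
    | false =>
      left
      constructor
      · simp [blk, d1, d2, h, hweps]
      · show cnt eps m + _ = cnt eps m
        rw [d1, d2, h]
        simp

lemma join_sigma_blk (weps : List Bool) (u : Nat → List Bool) (eps : Nat → Bool)
    (sigma : List Bool → List Bool) (hweps : sigma weps = []) (m : Nat) :
    (List.ofFn fun i : Fin m => sigma (blk weps u eps i)).flatten
      = concatPre (fun i => sigma (u i)) (cnt eps m) := by
  induction m with
  | zero => simp [concatPre, cnt]
  | succ m ih =>
    rw [List.ofFn_succ']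
    simp only [List.concat_eq_append, List.flatten_append, List.flatten_cons,
      List.flatten_nil, List.append_nil, Fin.val_last, Fin.coe_castSucc]
    rw [ih]
    rcases blk_step weps u eps sigma hweps m with ⟨h1, h2⟩ | ⟨h1, h2⟩
    · rw [h1, h2, List.append_nil]
    · rw [h1, h2, concatPre_succ]

lemma blockApply_word {k : Nat} (hk : 0 < k) (weps : List Bool) (u : Nat → List Bool)
    (eps : Nat → Bool) (sigma : List Bool → List Bool)
    (hweps : sigma weps = []) (hlen : weps.length = k) (hu : ∀ i, (u i).length = k) (n : Nat) :
    blockApply k sigma (prefixOf (wordOf k (blk weps u eps)) (n * k))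
      = concatPre (fun i => sigma (u i)) (cnt eps n) := by
  rw [prefixOf_wordOf hk _ (blk_length weps u eps hlen hu)]
  have hjoin : (List.ofFn fun i : Fin n => blk weps u eps i).flatten
      = (List.ofFn fun i : Fin n => blk weps u eps i).flatten := rfl
  rw [show ((List.ofFn fun i : Fin n => blk weps u eps i)   : List (List Bool)).flatten
      = (List.ofFn fun i : Fin n => blk weps u eps i).flatten from rfl]
  rw [blockApply_join hk sigma _ (by
    intro g hg
    rw [List.mem_ofFn] at hg
    obtain ⟨i, rfl⟩ := hg
    exact blk_length weps u eps hlen hu i)]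
  rw [List.map_ofFn]
  exact join_sigma_blk weps u eps sigma hweps n

lemma exists_getD_ne {k : Nat} {a b : List Bool} (hab : a ≠ b)
    (ha : a.length = k) (hb : b.length = k) :
    ∃ t, t < k ∧ a.getD t false ≠ b.getD t false := by
  by_contra h
  push_neg at h
  apply hab
  apply List.ext_getElem (ha.trans hb.symm)
  intro t h1 h2
  have := h t (by omega)
  rwa [List.getD_eq_getElem a false h1, List.getD_eq_getElem b false h2] at this

lemma NEZ_word {k : Nat} (hk : 0 < k) (weps : List Bool) (u : Nat → List Bool)
    (eps : Nat → Bool) (hlen : weps.length = k) (hu : ∀ i, (u i).length = k)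
    (huw : ∀ i, u i ≠ weps) :
    NEZ (wordOf k (blk weps u eps)) := by
  intro n
  by_cases hw : ∃ t, t < k ∧ weps.getD t false = true
  · obtain ⟨t, htk, htw⟩ := hw
    refine ⟨3*n*k + t, ?_, ?_⟩
    · have : n ≤ 3*n*k := by nlinarith
      omega
    · rw [wordOf_block hk _ (3*n) t htk]
      have : blk weps u eps (3*n) = weps := by
        have : (3*n) % 3 = 0 := by omega
        simp [blk, this]
      rw [this, htw]
  · push_neg at hw
    obtain ⟨t, htk, htne⟩ := exists_getD_ne (huw n) (hu n) hlen
    have hwf : weps.getD t false = false := by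
      cases h : weps.getD t false with
      | false => rfl
      | true => exact absurd h (by simpa using hw t htk)
    have hut : (u n).getD t false = true := by
      cases h : (u n).getD t false with
      | false => rw [h, hwf] at htne; exact absurd rfl htne
      | true => rfl
    set b : Nat := if eps n then 3*n+2 else 3*n+1 with hb
    have hblk : blk weps u eps b = u n := by
      cases h : eps n with
      | true =>
        have e1 : b = 3*n+2 := by rw [hb, h]; simp
        have e2 : (3*n+2) % 3 = 2 := by omega
        have e3 : (3*n+2) / 3 = n := by omega
        simp [blk, e1, e2, e3, h]
      | false =>
        have e1 : b = 3*n+1 := by rw [hb, h]; simp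
        have e2 : (3*n+1) % 3 = 1 := by omega
        have e3 : (3*n+1) / 3 = n := by omega
        simp [blk, e1, e2, e3, h]
    refine ⟨b*k + t, ?_, ?_⟩
    · have hbn : 3*n+1 ≤ b := by cases h : eps n <;> simp [hb, h]
      have : b ≤ b * k := Nat.le_mul_of_pos_right b hk
      omega
    · rw [wordOf_block hk _ b t htk, hblk, hut]

lemma blk_at_3i1 (weps : List Bool) (u : Nat → List Bool) (eps : Nat → Bool) (i : Nat) :
    blk weps u eps (3*i+1) = if eps i then weps else u i := by
  have e2 : (3*i+1) % 3 = 1 := by omega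
  have e3 : (3*i+1) / 3 = i := by omega
  simp [blk, e2, e3]

lemma word_inj {k : Nat} (hk : 0 < k) (weps : List Bool) (u : Nat → List Bool)
    (hlen : weps.length = k) (hu : ∀ i, (u i).length = k) (huw : ∀ i, u i ≠ weps)
    {e1 e2 : Nat → Bool}
    (h : wordOf k (blk weps u e1) = wordOf k (blk weps u e2)) : e1 = e2 := by
  funext i
  by_contra hne
  obtain ⟨t, htk, htne⟩ := exists_getD_ne (huw i) (hu i) hlen
  have hw1 := wordOf_block hk (blk weps u e1) (3*i+1) t htk
  have hw2 := wordOf_block hk (blk weps u e2) (3*i+1) t htk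
  have heq : (blk weps u e1 (3*i+1)).getD t false = (blk weps u e2 (3*i+1)).getD t false := by
    rw [← hw1, ← hw2, h]
  rw [blk_at_3i1, blk_at_3i1] at heq
  cases h1 : e1 i with
  | true =>
    cases h2 : e2 i with
    | true => rw [h1, h2] at hne; exact hne rfl
    | false =>
      rw [h1, h2, if_pos rfl, if_neg (by simp)] at heq
      exact htne heq.symm
  | false =>
    cases h2 : e2 i with
    | true =>
      rw [h1, h2, if_neg (by simp), if_pos rfl] at heq
      exact htne heq
    | false => rw [h1, h2] at hne; exact hne rfl

lemma blk_ublock (weps : List Bool) (u : Nat → List Bool) (eps : Nat → Bool) (i : Nat) :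
    blk weps u eps (if eps i then 3*i+2 else 3*i+1) = u i := by
  cases h : eps i with
  | true =>
    have e2 : (3*i+2) % 3 = 2 := by omega
    have e3 : (3*i+2) / 3 = i := by omega
    simp [blk, e2, e3, h]
  | false =>
    have e2 : (3*i+1) % 3 = 1 := by omega
    have e3 : (3*i+1) / 3 = i := by omega
    simp [blk, e2, e3, h]

theorem notCountableBoolSeq : ¬ Countable (ℕ → Bool) := by
  intro h
  have := Cardinal.mk_le_aleph0 (α := ℕ → Bool)
  rw [Cardinal.mk_arrow] at this
  simp [Cardinal.mk_bool] at this
  exact absurd this (not_le.mpr Cardinal.aleph0_lt_continuum)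

/-- under the optimality condition every fiber of `fSigma` over
`[0,1]` is uncountable. -/
theorem fSigma_all_fibers_uncountable
    (k : Nat) (sigma : List Bool -> List Bool) (weps : List Bool)
    (hk : 2 ≤ k) (hlen : weps.length = k)
    (hne1 : weps ≠ List.replicate k true)
    (herase : ∀ w : List Bool, w.length = k → (sigma w = [] ↔ w = weps))
    (hOC : OC k sigma) :
    ∀ y ∈ Set.Icc (0:ℝ) 1,
      ¬ (Set.Icc (0:ℝ) 1 ∩ fSigma k sigma weps ⁻¹' {y}).Countable := by
  intro y hy hcount
  have hk0 : 0 < k := by omega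
  set w := digSeq y with hwdef
  have hw : valInf w = y := exists_expansion y hy.1 hy.2
  obtain ⟨u, hu, hdecomp⟩ := hOC w
  have hulen : ∀ i, (u i).length = k := fun i => (hu i).1
  have hsu : ∀ i, sigma (u i) ≠ [] := fun i => (hu i).2
  have huw : ∀ i, u i ≠ weps := fun i h => hsu i ((herase (u i) (hulen i)).2 h)
  have hweps0 : sigma weps = [] := (herase weps hlen).2 rfl
  set word : (Nat → Bool) → (Nat → Bool) := fun e => wordOf k (blk weps u e) with hword
  set x : (Nat → Bool) → ℝ := fun e => valInf (word e) with hx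
  have hNEZ : ∀ e, NEZ (word e) := fun e => NEZ_word hk0 weps u e hlen hulen huw
  have htilde : ∀ e, tilde (x e) = word e := fun e => tilde_valInf (hNEZ e)
  -- cnt tends to infinity
  have hcnt_top : ∀ e : Nat → Bool, Filter.Tendsto (cnt e) Filter.atTop Filter.atTop := by
    intro e
    apply Filter.tendsto_atTop_atTop.2
    intro b
    refine ⟨3*b, fun n hn => ?_⟩
    have h1 : cnt e (3*b) = b := (cnt_spec e b).1
    have := cnt_mono e hn
    omega
  -- each x e is in the fiber
  have hfiber : ∀ e, x e ∈ Set.Icc (0:ℝ) 1 ∩ fSigma k sigma weps ⁻¹' {y} := by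
    intro e
    refine ⟨⟨valInf_nonneg _, valInf_le_one _⟩, ?_⟩
    show fSigma k sigma weps (x e) = y
    rw [fSigma, if_neg]
    · -- compute the sup
      have hF : ∀ n, blockApply k sigma (prefixOf (tilde (x e)) (n * k))
          = prefixOf w (concatPre (fun i => sigma (u i)) (cnt e n)).length := by
        intro n
        rw [htilde e, hword]
        rw [blockApply_word hk0 weps u e sigma hweps0 hlen hulen n]
        exact hdecomp (cnt e n)
      have hbound : ∀ n, valFin (blockApply k sigma (prefixOf (tilde (x e)) (n * k))) ≤ y := by
        intro n
        rw [hF n, ← hw]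
        exact valFin_prefixOf_le w _
      have hbdd : BddAbove (Set.range fun n =>
          valFin (blockApply k sigma (prefixOf (tilde (x e)) (n * k)))) := by
        refine ⟨y, ?_⟩
        rintro _ ⟨n, rfl⟩
        exact hbound n
      have hLc : Filter.Tendsto
          (fun n => (concatPre (fun i => sigma (u i)) (cnt e n)).length)
          Filter.atTop Filter.atTop := by
        apply Filter.tendsto_atTop_mono
          (fun n => concatPre_length_ge (fun i => sigma (u i)) hsu (cnt e n))
        exact hcnt_top e
      have hT : Filter.Tendsto
          (fun n => valFin (blockApply k sigma (prefixOf (tilde (x e)) (n * k))))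
          Filter.atTop (nhds y) := by
        have hcomp := (tendsto_valFin_prefixOf w).comp hLc
        rw [hw] at hcomp
        have heqfun : (fun n => valFin (blockApply k sigma (prefixOf (tilde (x e)) (n * k))))
            = fun n => valFin (prefixOf w (concatPre (fun i => sigma (u i)) (cnt e n)).length) := by
          funext n
          rw [hF n]
        rw [heqfun]
        exact hcomp
      apply le_antisymm
      · exact ciSup_le hbound
      · exact le_of_tendsto hT (Filter.Eventually.of_forall fun n => le_ciSup hbdd n)
    · rw [not_or]
      constructor
      · push_neg
        exact ⟨word e, hNEZ e, rfl⟩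
      · intro hall
        obtain ⟨t, htk, htne⟩ := exists_getD_ne (huw 0) (hulen 0) hlen
        set b : Nat := if e 0 then 3*0+2 else 3*0+1 with hb
        have hblk : blk weps u e b = u 0 := blk_ublock weps u e 0
        have hmod : (b*k + t) % k = t := by
          rw [mul_comm, Nat.mul_add_mod, Nat.mod_eq_of_lt htk]
        have h1 : wordOf k (blk weps u e) (b*k + t) = weps.getD ((b*k + t) % k) false := by
          have h2 := hall (b*k + t)
          rw [htilde e] at h2
          exact h2
        rw [wordOf_block hk0 _ b t htk, hblk, hmod] at h1
        exact htne h1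
  -- injectivity
  have hinj : Function.Injective x := by
    intro e1 e2 heq
    have hweq : word e1 = word e2 := valInf_injOn_NEZ (hNEZ e1) (hNEZ e2) heq
    exact word_inj hk0 weps u hlen hulen huw hweq
  have hpre : x ⁻¹' (Set.Icc (0:ℝ) 1 ∩ fSigma k sigma weps ⁻¹' {y}) = Set.univ :=
    Set.eq_univ_of_forall hfiber
  have := hcount.preimage hinj
  rw [hpre] at this
  rw [Set.countable_univ_iff] at this
  exact notCountableBoolSeq this
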